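/- Let G be a bipartite simple graph with maximum degree Δ(G) ≥ 1. Let φ be a partial proper edge coloring of the Cartesian product G □ K₂ defined on a set E₀ of edges using at most Δ(G) + 1 colors, such that any two distinct edges of E₀ are at distance at least 3 in G □ K₂. Then φ extends to a proper edge coloring of G □ K₂ using Δ(G) + 1 colors. -/

import Mathlib

open SimpleGraph
open scoped Classical

/-- A (total) edge coloring `c` with `n` colors is proper on the edge set `E₀ ⊆ G.edgeSet`:
any two distinct edges of `E₀` sharing a vertex receive different colors. -/
def IsProperEdgeColoringOn {V : Type*} (G : SimpleGraph V) (E₀ : Set (Sym2 V)) {n : ℕ}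
    (c : Sym2 V → Fin n) : Prop :=
  E₀ ⊆ G.edgeSet ∧
    ∀ e ∈ E₀, ∀ f ∈ E₀, e ≠ f → (∃ v, v ∈ e ∧ v ∈ f) → c e ≠ c f

/-- A proper edge coloring of `G` with `n` colors: any two distinct edges of `G`
sharing a vertex receive different colors. -/
def IsProperEdgeColoring {V : Type*} (G : SimpleGraph V) {n : ℕ} (c : Sym2 V → Fin n) : Prop :=
  ∀ e ∈ G.edgeSet, ∀ f ∈ G.edgeSet, e ≠ f → (∃ v, v ∈ e ∧ v ∈ f) → c e ≠ c f

/-- The distance between edges `e` and `f` of `G` is at least `k`: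
every endpoint of `e` is at (extended) graph distance at least `k` from every endpoint of `f`. -/
def EdgeDistGE {V : Type*} (G : SimpleGraph V) (e f : Sym2 V) (k : ℕ) : Prop :=
  ∀ x ∈ e, ∀ y ∈ f, (k : ℕ∞) ≤ G.edist x y

/-- The chromatic index of `G`: the least `n` such that `G` admits a proper edge coloring
with `n` colors. -/
noncomputable def chromIndex {V : Type*} (G : SimpleGraph V) : ℕ :=
  sInf {n | ∃ c : Sym2 V → Fin n, IsProperEdgeColoring G c}

/-- A finite graph is Class 1 if its chromatic index equals its maximum degree. -/
def IsClassOne {V : Type*} [Fintype V] (G : SimpleGraph V) : Prop :=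
  chromIndex G = G.maxDegree

/-- The iterated Cartesian (box) product of the family of graphs `G i`. -/
def boxProdPi {ι : Type*} {V : ι → Type*} (G : ∀ i, SimpleGraph (V i)) :
    SimpleGraph (∀ i, V i) where
  Adj x y := ∃ i, (G i).Adj (x i) (y i) ∧ ∀ j, j ≠ i → x j = y j
  symm := ⟨fun x y ⟨i, ha, he⟩ => ⟨i, ha.symm, fun j hj => (he j hj).symm⟩⟩
  loopless := ⟨fun x ⟨i, ha, _⟩ => (G i).irrefl ha⟩

/-- The `d`-fold iterated Cartesian (box) product of `G` with itself. -/
def boxPow {V : Type*} (G : SimpleGraph V) (d : ℕ) : SimpleGraph (Fin d → V) :=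
  boxProdPi fun _ => G

namespace PfExtAux
variable {α : Type*}


/-- Two `Sym2`s share a vertex. -/
def Shares (e f : Sym2 α) : Prop := ∃ w, w ∈ e ∧ w ∈ f

/-- An edge is good for a bipartition `σ` if one endpoint is on each side. -/
def Good (σ : α → Bool) (e : Sym2 α) : Prop :=
  ∃ x y, e = s(x, y) ∧ σ x = true ∧ σ y = false

/-- The `true`-side endpoint of a good edge. -/
noncomputable def aend (σ : α → Bool) (e : Sym2 α) : α :=
  if h : ∃ w ∈ e, σ w = true then h.choose else e.out.1

/-- The `false`-side endpoint of a good edge. -/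
noncomputable def bend (σ : α → Bool) (e : Sym2 α) : α :=
  if h : ∃ w ∈ e, σ w = false then h.choose else e.out.1

lemma aend_mem_of_good {σ : α → Bool} {e : Sym2 α} (h : Good σ e) :
    aend σ e ∈ e ∧ σ (aend σ e) = true := by
  obtain ⟨x, y, rfl, hx, hy⟩ := h
  have hex : ∃ w ∈ s(x, y), σ w = true := ⟨x, by simp, hx⟩
  rw [aend, dif_pos hex]
  exact ⟨hex.choose_spec.1, hex.choose_spec.2⟩

lemma bend_mem_of_good {σ : α → Bool} {e : Sym2 α} (h : Good σ e) :
    bend σ e ∈ e ∧ σ (bend σ e) = false := by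
  obtain ⟨x, y, rfl, hx, hy⟩ := h
  have hex : ∃ w ∈ s(x, y), σ w = false := ⟨y, by simp, hy⟩
  rw [bend, dif_pos hex]
  exact ⟨hex.choose_spec.1, hex.choose_spec.2⟩

lemma eq_aend {σ : α → Bool} {e : Sym2 α} (h : Good σ e) {w : α}
    (hw : w ∈ e) (hσ : σ w = true) : w = aend σ e := by
  obtain ⟨x, y, he, hx, hy⟩ := h
  subst he
  have ha := aend_mem_of_good (σ := σ) ⟨x, y, rfl, hx, hy⟩
  have h1 : aend σ s(x, y) = x := by
    rcases Sym2.mem_iff.1 ha.1 with h1 | h1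
    · exact h1
    · exfalso; rw [h1, hy] at ha; simp at ha
  have h2 : w = x := by
    rcases Sym2.mem_iff.1 hw with h2 | h2
    · exact h2
    · exfalso; rw [h2, hy] at hσ; simp at hσ
  rw [h2, h1]

lemma eq_bend {σ : α → Bool} {e : Sym2 α} (h : Good σ e) {w : α}
    (hw : w ∈ e) (hσ : σ w = false) : w = bend σ e := by
  obtain ⟨x, y, he, hx, hy⟩ := h
  subst he
  have ha := bend_mem_of_good (σ := σ) ⟨x, y, rfl, hx, hy⟩
  have h1 : bend σ s(x, y) = y := by
    rcases Sym2.mem_iff.1 ha.1 with h1 | h1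
    · exfalso; rw [h1, hx] at ha; simp at ha
    · exact h1
  have h2 : w = y := by
    rcases Sym2.mem_iff.1 hw with h2 | h2
    · exfalso; rw [h2, hx] at hσ; simp at hσ
    · exact h2
  rw [h2, h1]

lemma good_rep {σ : α → Bool} {e : Sym2 α} (h : Good σ e) :
    e = s(aend σ e, bend σ e) := by
  obtain ⟨x, y, he, hx, hy⟩ := h
  have h' : Good σ e := ⟨x, y, he, hx, hy⟩
  have hxa : x = aend σ e := eq_aend h' (by rw [he]; simp) hx
  have hyb : y = bend σ e := eq_bend h' (by rw [he]; simp) hy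
  rw [← hxa, ← hyb, he]

lemma shares_iff {σ : α → Bool} {e f : Sym2 α} (he : Good σ e) (hf : Good σ f) :
    Shares e f ↔ (aend σ e = aend σ f ∨ bend σ e = bend σ f) := by
  constructor
  · rintro ⟨w, hwe, hwf⟩
    cases hσ : σ w with
    | true => exact Or.inl ((eq_aend he hwe hσ).symm.trans (eq_aend hf hwf hσ))
    | false => exact Or.inr ((eq_bend he hwe hσ).symm.trans (eq_bend hf hwf hσ))
  · rintro (h | h)
    · exact ⟨aend σ e, (aend_mem_of_good he).1, h ▸ (aend_mem_of_good hf).1⟩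
    · exact ⟨bend σ e, (bend_mem_of_good he).1, h ▸ (bend_mem_of_good hf).1⟩

lemma eq_of_ends_eq {σ : α → Bool} {e f : Sym2 α} (he : Good σ e) (hf : Good σ f)
    (ha : aend σ e = aend σ f) (hb : bend σ e = bend σ f) : e = f := by
  rw [good_rep he, good_rep hf, ha, hb]

lemma shares_comm {e f : Sym2 α} : Shares e f ↔ Shares f e := by
  constructor <;> rintro ⟨w, h1, h2⟩ <;> exact ⟨w, h2, h1⟩

lemma shares_of_aend {σ : α → Bool} {e f : Sym2 α} (he : Good σ e) (hf : Good σ f)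
    (h : aend σ e = aend σ f) : Shares e f := (shares_iff he hf).2 (Or.inl h)

lemma shares_of_bend {σ : α → Bool} {e f : Sym2 α} (he : Good σ e) (hf : Good σ f)
    (h : bend σ e = bend σ f) : Shares e f := (shares_iff he hf).2 (Or.inr h)


lemma mem_end_cases {σ : α → Bool} {e : Sym2 α} (h : Good σ e) {w : α} (hw : w ∈ e) :
    w = aend σ e ∨ w = bend σ e := by
  cases hσ : σ w with
  | true => exact Or.inl (eq_aend h hw hσ)
  | false => exact Or.inr (eq_bend h hw hσ)

/-- `f` absorbs `e` (there is an arc from `e` to `f` in the Galvin orientation). -/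
def Absorbs (σ : α → Bool) (c₀ : Sym2 α → ℕ) (f e : Sym2 α) : Prop :=
  (aend σ e = aend σ f ∧ c₀ e < c₀ f) ∨ (bend σ e = bend σ f ∧ c₀ f < c₀ e)

/-- Edges of `U` that are `c₀`-maximal on their A-star. -/
noncomputable def AMax (σ : α → Bool) (c₀ : Sym2 α → ℕ) (U : Finset (Sym2 α)) :
    Finset (Sym2 α) :=
  U.filter (fun e => ∀ f ∈ U, aend σ f = aend σ e → c₀ f ≤ c₀ e)

lemma AMax_subset {σ c₀} {U : Finset (Sym2 α)} : AMax σ c₀ U ⊆ U :=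
  Finset.filter_subset _ _

lemma exists_amax {σ : α → Bool} {c₀ : Sym2 α → ℕ} {U : Finset (Sym2 α)}
    {e : Sym2 α} (he : e ∈ U) :
    ∃ f ∈ AMax σ c₀ U, aend σ f = aend σ e ∧ c₀ e ≤ c₀ f := by
  classical
  obtain ⟨f, hf, hmax⟩ := Finset.exists_max_image
    (U.filter (fun g => aend σ g = aend σ e)) c₀ ⟨e, by simp [he]⟩
  rw [Finset.mem_filter] at hf
  refine ⟨f, ?_, hf.2, hmax e (by simp [he])⟩
  rw [AMax, Finset.mem_filter]
  exact ⟨hf.1, fun g hg hge => hmax g (by rw [Finset.mem_filter]; exact ⟨hg, hge.trans hf.2⟩)⟩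

lemma kernel_exists (σ : α → Bool) (c₀ : Sym2 α → ℕ) :
    ∀ (U : Finset (Sym2 α)),
    (∀ e ∈ U, Good σ e) →
    (∀ e ∈ U, ∀ f ∈ U, e ≠ f → Shares e f → c₀ e ≠ c₀ f) →
    ∃ K, K ⊆ U ∧ (∀ e ∈ K, ∀ f ∈ K, e ≠ f → ¬ Shares e f) ∧
      (∀ e ∈ U, e ∉ K → ∃ f ∈ K, Absorbs σ c₀ f e) ∧
      (∀ w, (∃ e ∈ AMax σ c₀ U, bend σ e = w) →
        ∃ k ∈ K, bend σ k = w ∧ ∀ e ∈ AMax σ c₀ U, bend σ e = w → c₀ k ≤ c₀ e) := by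
  classical
  intro U
  induction U using Finset.strongInductionOn with
  | _ U IH =>
  intro hgood hinj
  set P := AMax σ c₀ U with hP
  set T := P.filter (fun e => ∀ f ∈ P, bend σ f = bend σ e → c₀ e ≤ c₀ f) with hT
  have hTP : T ⊆ P := Finset.filter_subset _ _
  have hPU : P ⊆ U := AMax_subset
  -- minimal element of the B-star of `P` at `w`, lies in `T`
  have hmin : ∀ w, (∃ e ∈ P, bend σ e = w) →
      ∃ t ∈ T, bend σ t = w ∧ ∀ e ∈ P, bend σ e = w → c₀ t ≤ c₀ e := by
    intro w ⟨e, heP, hew⟩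
    obtain ⟨t, ht, hmin⟩ := Finset.exists_min_image
      (P.filter (fun g => bend σ g = w)) c₀ ⟨e, by simp [heP, hew]⟩
    rw [Finset.mem_filter] at ht
    refine ⟨t, ?_, ht.2, fun g hg hgw => hmin g (by simp [hg, hgw])⟩
    rw [hT, Finset.mem_filter]
    exact ⟨ht.1, fun g hg hgt => hmin g (Finset.mem_filter.2 ⟨hg, by rw [hgt, ht.2]⟩)⟩
  by_cases hR : P \ T = ∅
  · -- base case : no rejections, K := T
    have hPT : P ⊆ T := by
      intro e he
      by_contra hne
      have hmem : e ∈ P \ T := Finset.mem_sdiff.2 ⟨he, hne⟩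
      rw [hR] at hmem
      simp at hmem
    refine ⟨T, hTP.trans hPU, ?_, ?_, ?_⟩
    · intro e heT f hfT hne hsh
      have heG := hgood e (hPU (hTP heT))
      have hfG := hgood f (hPU (hTP hfT))
      rcases (shares_iff heG hfG).1 hsh with hae | hbe
      · have h1 := (Finset.mem_filter.1 (hTP heT)).2 f (hPU (hTP hfT)) hae.symm
        have h2 := (Finset.mem_filter.1 (hTP hfT)).2 e (hPU (hTP heT)) hae
        exact hinj e (hPU (hTP heT)) f (hPU (hTP hfT)) hne hsh (le_antisymm h2 h1)
      · have h1 := (Finset.mem_filter.1 heT).2 f (hTP hfT) hbe.symm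
        have h2 := (Finset.mem_filter.1 hfT).2 e (hTP heT) hbe
        exact hinj e (hPU (hTP heT)) f (hPU (hTP hfT)) hne hsh (le_antisymm h1 h2)
    · intro e heU heK
      have heP : e ∉ P := fun h => heK (hPT h)
      obtain ⟨f, hfP, hfa, hfc⟩ := exists_amax (σ := σ) (c₀ := c₀) heU
      have hfe : f ≠ e := fun h => heP (h ▸ hfP)
      have hsh : Shares e f := shares_of_aend (hgood e heU) (hgood f (hPU hfP)) hfa.symm
      have hlt : c₀ e < c₀ f :=
        lt_of_le_of_ne hfc (hinj e heU f (hPU hfP) hfe.symm hsh)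
      exact ⟨f, hPT hfP, Or.inl ⟨hfa.symm, hlt⟩⟩
    · intro w hw
      obtain ⟨t, htT, htw, htm⟩ := hmin w hw
      exact ⟨t, htT, htw, htm⟩
  · -- recursive case
    have hRne : (P \ T).Nonempty := Finset.nonempty_of_ne_empty hR
    have hRU : P \ T ⊆ U := fun e he => hPU (Finset.mem_sdiff.1 he).1
    have hU' : U \ (P \ T) ⊂ U := Finset.sdiff_ssubset hRU hRne
    set U' := U \ (P \ T) with hU'def
    have hgood' : ∀ e ∈ U', Good σ e := fun e he => hgood e (Finset.mem_sdiff.1 he).1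
    have hinj' : ∀ e ∈ U', ∀ f ∈ U', e ≠ f → Shares e f → c₀ e ≠ c₀ f := fun e he f hf =>
      hinj e (Finset.mem_sdiff.1 he).1 f (Finset.mem_sdiff.1 hf).1
    obtain ⟨K, hKU', hKind, hKabs, hKdag⟩ := IH U' hU' hgood' hinj'
    have hKU : K ⊆ U := hKU'.trans (Finset.sdiff_subset)
    -- T-edges survive in U' and stay A-maximal
    have hTU' : ∀ t ∈ T, t ∈ U' := by
      intro t ht
      refine Finset.mem_sdiff.2 ⟨hPU (hTP ht), fun hc => ?_⟩
      exact (Finset.mem_sdiff.1 hc).2 ht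
    have hTP' : ∀ t ∈ T, t ∈ AMax σ c₀ U' := by
      intro t ht
      rw [AMax, Finset.mem_filter]
      exact ⟨hTU' t ht, fun f hf hfa =>
        (Finset.mem_filter.1 (hTP ht)).2 f (Finset.mem_sdiff.1 hf).1 hfa⟩
    refine ⟨K, hKU, hKind, ?_, ?_⟩
    · intro e heU heK
      by_cases heR : e ∈ P \ T
      · -- rejected edge
        have heP : e ∈ P := (Finset.mem_sdiff.1 heR).1
        have heT : e ∉ T := (Finset.mem_sdiff.1 heR).2
        obtain ⟨t, htT, htw, htm⟩ := hmin (bend σ e) ⟨e, heP, rfl⟩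
        -- strict: some edge in P at bend e with smaller c₀
        have hstrict : c₀ t < c₀ e := by
          have : ¬ (∀ f ∈ P, bend σ f = bend σ e → c₀ e ≤ c₀ f) := by
            intro hc
            exact heT (Finset.mem_filter.2 ⟨heP, hc⟩)
          push_neg at this
          obtain ⟨f, hfP, hfb, hfl⟩ := this
          exact lt_of_le_of_lt (htm f hfP hfb) hfl
        obtain ⟨k, hkK, hkb, hkm⟩ := hKdag (bend σ e) ⟨t, hTP' t htT, htw⟩
        have hkt : c₀ k ≤ c₀ t := hkm t (hTP' t htT) htw
        exact ⟨k, hkK, Or.inr ⟨hkb.symm, lt_of_le_of_lt hkt hstrict⟩⟩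
      · exact hKabs e (Finset.mem_sdiff.2 ⟨heU, heR⟩) heK
    · intro w hw
      obtain ⟨t, htT, htw, htm⟩ := hmin w hw
      obtain ⟨k, hkK, hkb, hkm⟩ := hKdag w ⟨t, hTP' t htT, htw⟩
      refine ⟨k, hkK, hkb, fun e heP hew => ?_⟩
      exact le_trans (hkm t (hTP' t htT) htw) (htm e heP hew)

/-- Out-degree of `g` in the Galvin orientation restricted to `E`. -/
noncomputable def dplus (σ : α → Bool) (c₀ : Sym2 α → ℕ) (E : Finset (Sym2 α))
    (g : Sym2 α) : ℕ :=
  (E.filter (fun f => Absorbs σ c₀ f g)).card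

lemma galvin (σ : α → Bool) (c₀ : Sym2 α → ℕ) {D : ℕ} (hD : 0 < D)
    (L : Sym2 α → Finset (Fin D)) :
    ∀ (C : Finset (Fin D)) (E : Finset (Sym2 α)),
    (∀ e ∈ E, Good σ e) →
    (∀ e ∈ E, ∀ f ∈ E, e ≠ f → Shares e f → c₀ e ≠ c₀ f) →
    (∀ g ∈ E, dplus σ c₀ E g < (L g ∩ C).card) →
    ∃ c : Sym2 α → Fin D, (∀ g ∈ E, c g ∈ L g ∩ C) ∧
      (∀ g ∈ E, ∀ f ∈ E, g ≠ f → Shares g f → c g ≠ c f) := by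
  classical
  intro C
  induction C using Finset.strongInductionOn with
  | _ C IH =>
  intro E hgood hinj hinv
  rcases Finset.eq_empty_or_nonempty C with rfl | hCne
  · have hE : E = ∅ := by
      rw [Finset.eq_empty_iff_forall_notMem]
      intro g hg
      have := hinv g hg
      simp at this
    subst hE
    exact ⟨fun _ => ⟨0, hD⟩, by simp, by simp⟩
  · obtain ⟨γ, hγC⟩ := hCne
    set U := E.filter (fun g => γ ∈ L g) with hU
    have hUE : U ⊆ E := Finset.filter_subset _ _
    obtain ⟨K, hKU, hKind, hKabs, _⟩ := kernel_exists σ c₀ U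
      (fun e he => hgood e (hUE he)) (fun e he f hf => hinj e (hUE he) f (hUE hf))
    set E' := E \ K with hE'
    have hE'E : E' ⊆ E := Finset.sdiff_subset
    have hC' : C.erase γ ⊂ C := Finset.erase_ssubset hγC
    have hinv' : ∀ g ∈ E', dplus σ c₀ E' g < (L g ∩ C.erase γ).card := by
      intro g hg
      have hgE : g ∈ E := hE'E hg
      have hgK : g ∉ K := (Finset.mem_sdiff.1 hg).2
      by_cases hγg : γ ∈ L g
      · have hgU : g ∈ U := Finset.mem_filter.2 ⟨hgE, hγg⟩
        obtain ⟨k, hkK, hkabs⟩ := hKabs g hgU hgK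
        have hkE : k ∈ E := hUE (hKU hkK)
        have hkmem : k ∈ E.filter (fun f => Absorbs σ c₀ f g) :=
          Finset.mem_filter.2 ⟨hkE, hkabs⟩
        have h1 : dplus σ c₀ E' g ≤ dplus σ c₀ E g - 1 := by
          rw [dplus, dplus, ← Finset.card_erase_of_mem hkmem]
          apply Finset.card_le_card
          intro f hf
          rw [Finset.mem_filter] at hf
          refine Finset.mem_erase.2 ⟨?_, Finset.mem_filter.2 ⟨hE'E hf.1, hf.2⟩⟩
          intro hfk
          exact (Finset.mem_sdiff.1 hf.1).2 (hfk ▸ hkK)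
        have h2 : 1 ≤ dplus σ c₀ E g := by
          rw [dplus]
          exact Finset.card_pos.2 ⟨k, hkmem⟩
        have h3 : dplus σ c₀ E g < (L g ∩ C).card := hinv g hgE
        have h4 : (L g ∩ C.erase γ).card = (L g ∩ C).card - 1 := by
          rw [Finset.inter_erase, Finset.card_erase_of_mem (Finset.mem_inter.2 ⟨hγg, hγC⟩)]
        omega
      · have h4 : L g ∩ C.erase γ = L g ∩ C := by
          ext x
          simp only [Finset.mem_inter, Finset.mem_erase]
          constructor
          · rintro ⟨hx1, _, hx2⟩; exact ⟨hx1, hx2⟩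
          · rintro ⟨hx1, hx2⟩
            exact ⟨hx1, fun hxγ => hγg (hxγ ▸ hx1), hx2⟩
        have h5 : dplus σ c₀ E' g ≤ dplus σ c₀ E g :=
          Finset.card_le_card (Finset.filter_subset_filter _ hE'E)
        rw [h4]
        exact lt_of_le_of_lt h5 (hinv g hgE)
    obtain ⟨c', hc'mem, hc'prop⟩ := IH (C.erase γ) hC' E'
      (fun e he => hgood e (hE'E he)) (fun e he f hf => hinj e (hE'E he) f (hE'E hf)) hinv'
    refine ⟨fun g => if g ∈ K then γ else c' g, ?_, ?_⟩
    · intro g hg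
      by_cases hgK : g ∈ K
      · simp only [if_pos hgK]
        exact Finset.mem_inter.2 ⟨(Finset.mem_filter.1 (hKU hgK)).2, hγC⟩
      · simp only [if_neg hgK]
        have := hc'mem g (Finset.mem_sdiff.2 ⟨hg, hgK⟩)
        rw [Finset.mem_inter] at this ⊢
        exact ⟨this.1, Finset.mem_of_mem_erase this.2⟩
    · intro g hg f hf hne hsh
      by_cases hgK : g ∈ K <;> by_cases hfK : f ∈ K
      · exact absurd hsh (hKind g hgK f hfK hne)
      · simp only [if_pos hgK, if_neg hfK]
        have := hc'mem f (Finset.mem_sdiff.2 ⟨hf, hfK⟩)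
        rw [Finset.mem_inter] at this
        intro hc
        exact (Finset.mem_erase.1 this.2).1 hc.symm
      · simp only [if_neg hgK, if_pos hfK]
        have := hc'mem g (Finset.mem_sdiff.2 ⟨hg, hgK⟩)
        rw [Finset.mem_inter] at this
        intro hc
        exact (Finset.mem_erase.1 this.2).1 hc
      · simp only [if_neg hgK, if_neg hfK]
        exact hc'prop g (Finset.mem_sdiff.2 ⟨hg, hgK⟩) f (Finset.mem_sdiff.2 ⟨hf, hfK⟩) hne hsh

lemma dplus_lt (σ : α → Bool) (c₀ : Sym2 α → ℕ) (n : ℕ) (E : Finset (Sym2 α))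
    (hgood : ∀ e ∈ E, Good σ e)
    (hinj : ∀ e ∈ E, ∀ f ∈ E, e ≠ f → Shares e f → c₀ e ≠ c₀ f)
    (hlt : ∀ e ∈ E, c₀ e < n) {g : Sym2 α} (hg : g ∈ E) :
    dplus σ c₀ E g < n := by
  classical
  set A := E.filter (fun f => aend σ f = aend σ g ∧ c₀ g < c₀ f) with hA
  set B := E.filter (fun f => bend σ f = bend σ g ∧ c₀ f < c₀ g) with hB
  have hsub : E.filter (fun f => Absorbs σ c₀ f g) ⊆ A ∪ B := by
    intro f hf
    rw [Finset.mem_filter] at hf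
    rcases hf.2 with ⟨h1, h2⟩ | ⟨h1, h2⟩
    · exact Finset.mem_union_left _ (Finset.mem_filter.2 ⟨hf.1, h1.symm, h2⟩)
    · exact Finset.mem_union_right _ (Finset.mem_filter.2 ⟨hf.1, h1.symm, h2⟩)
  have hAcard : A.card ≤ n - 1 - c₀ g := by
    have : A.card ≤ (Finset.Ico (c₀ g + 1) n).card := by
      apply Finset.card_le_card_of_injOn c₀
      · intro f hf
        simp only [Finset.mem_coe, hA, Finset.mem_filter] at hf
        rw [Finset.mem_coe, Finset.mem_Ico]
        exact ⟨hf.2.2, hlt f hf.1⟩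
      · intro f1 h1 f2 h2 hc
        rw [Finset.coe_filter, Set.mem_setOf_eq] at h1 h2
        by_contra hne
        exact hinj f1 h1.1 f2 h2.1 hne
          (shares_of_aend (hgood f1 h1.1) (hgood f2 h2.1) (h1.2.1.trans h2.2.1.symm)) hc
    rw [Nat.card_Ico] at this
    omega
  have hBcard : B.card ≤ c₀ g := by
    have : B.card ≤ (Finset.range (c₀ g)).card := by
      apply Finset.card_le_card_of_injOn c₀
      · intro f hf
        simp only [Finset.mem_coe, hB, Finset.mem_filter] at hf
        rw [Finset.mem_coe, Finset.mem_range]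
        exact hf.2.2
      · intro f1 h1 f2 h2 hc
        rw [Finset.coe_filter, Set.mem_setOf_eq] at h1 h2
        by_contra hne
        exact hinj f1 h1.1 f2 h2.1 hne
          (shares_of_bend (hgood f1 h1.1) (hgood f2 h2.1) (h1.2.1.trans h2.2.1.symm)) hc
    rw [Finset.card_range] at this
    exact this
  have h1 : dplus σ c₀ E g ≤ A.card + B.card :=
    le_trans (Finset.card_le_card hsub) (Finset.card_union_le _ _)
  have h2 : c₀ g < n := hlt g hg
  omega

theorem konig (σ : α → Bool) (n : ℕ) :
    ∀ (F : Finset (Sym2 α)),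
    (∀ e ∈ F, Good σ e) →
    (∀ v : α, ((F.filter (fun e => v ∈ e)).card ≤ n)) →
    ∃ c : Sym2 α → ℕ, (∀ e ∈ F, c e < n) ∧
      (∀ e ∈ F, ∀ f ∈ F, e ≠ f → Shares e f → c e ≠ c f) := by
  classical
  intro F
  induction F using Finset.strongInductionOn with
  | _ F IH =>
  intro hgood hdeg
  rcases Finset.eq_empty_or_nonempty F with rfl | ⟨e₀, he₀⟩
  · exact ⟨fun _ => 0, by simp, by simp⟩
  set F' := F.erase e₀ with hF'def
  have hF'F : F' ⊆ F := Finset.erase_subset _ _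
  have hF'ss : F' ⊂ F := Finset.erase_ssubset he₀
  obtain ⟨c, hclt, hcprop⟩ := IH F' hF'ss (fun e he => hgood e (hF'F he))
    (fun v => le_trans (Finset.card_le_card (Finset.filter_subset_filter _ hF'F)) (hdeg v))
  have huniq : ∀ (w : α) (g h : Sym2 α), g ∈ F' → h ∈ F' → w ∈ g → w ∈ h →
      c g = c h → g = h := by
    intro w g h hg hh hwg hwh hc
    by_contra hne
    exact hcprop g hg h hh hne ⟨w, hwg, hwh⟩ hc
  have hge₀ : Good σ e₀ := hgood e₀ he₀
  set u := aend σ e₀ with hu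
  set v := bend σ e₀ with hv
  have hue₀ : u ∈ e₀ ∧ σ u = true := aend_mem_of_good hge₀
  have hve₀ : v ∈ e₀ ∧ σ v = false := bend_mem_of_good hge₀
  set usedU := (F'.filter (fun g => u ∈ g)).image c with husedU
  set usedV := (F'.filter (fun g => v ∈ g)).image c with husedV
  have hcardaux : ∀ w : α, w ∈ e₀ →
      ((F'.filter (fun g => w ∈ g)).image c).card < n := by
    intro w hw
    have h1 : (F'.filter (fun g => w ∈ g)) = (F.filter (fun g => w ∈ g)).erase e₀ := by
      rw [hF'def, Finset.filter_erase]
    have he₀f : e₀ ∈ F.filter (fun g => w ∈ g) := Finset.mem_filter.2 ⟨he₀, hw⟩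
    have h2 : 1 ≤ (F.filter (fun g => w ∈ g)).card := Finset.card_pos.2 ⟨e₀, he₀f⟩
    calc ((F'.filter (fun g => w ∈ g)).image c).card
        ≤ (F'.filter (fun g => w ∈ g)).card := Finset.card_image_le
      _ = (F.filter (fun g => w ∈ g)).card - 1 := by rw [h1, Finset.card_erase_of_mem he₀f]
      _ < n := by have := hdeg w; omega
  obtain ⟨a, haR, haU⟩ : ∃ a ∈ Finset.range n, a ∉ usedU := by
    apply Finset.not_subset.1
    intro hsub
    exact absurd (Finset.card_le_card hsub)
      (by rw [Finset.card_range]; exact Nat.not_le.2 (hcardaux u hue₀.1))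
  rw [Finset.mem_range] at haR
  by_cases haV : a ∉ usedV
  · -- direct assignment
    refine ⟨fun g => if g = e₀ then a else c g, ?_, ?_⟩
    · intro e he
      by_cases h : e = e₀
      · simp [h, haR]
      · simpa [h] using hclt e (Finset.mem_erase.2 ⟨h, he⟩)
    · intro e he f hf hne hsh
      by_cases he' : e = e₀ <;> by_cases hf' : f = e₀
      · exact absurd (he'.trans hf'.symm) hne
      · subst he'
        have hfF' : f ∈ F' := Finset.mem_erase.2 ⟨hf', hf⟩
        simp only [if_pos rfl, if_neg hf']
        obtain ⟨w, hwe, hwf⟩ := hsh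
        intro hc
        rcases mem_end_cases hge₀ hwe with rfl | rfl
        · exact haU (Finset.mem_image.2 ⟨f, Finset.mem_filter.2 ⟨hfF', hwf⟩, hc.symm⟩)
        · exact haV (Finset.mem_image.2 ⟨f, Finset.mem_filter.2 ⟨hfF', hwf⟩, hc.symm⟩)
      · subst hf'
        have heF' : e ∈ F' := Finset.mem_erase.2 ⟨he', he⟩
        simp only [if_pos rfl, if_neg he']
        obtain ⟨w, hwe, hwf⟩ := hsh
        intro hc
        rcases mem_end_cases hge₀ hwf with rfl | rfl
        · exact haU (Finset.mem_image.2 ⟨e, Finset.mem_filter.2 ⟨heF', hwe⟩, hc⟩)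
        · exact haV (Finset.mem_image.2 ⟨e, Finset.mem_filter.2 ⟨heF', hwe⟩, hc⟩)
      · simp only [if_neg he', if_neg hf']
        exact hcprop e (Finset.mem_erase.2 ⟨he', he⟩) f (Finset.mem_erase.2 ⟨hf', hf⟩) hne hsh
  · -- Kempe chain argument
    push_neg at haV
    obtain ⟨b, hbR, hbV⟩ : ∃ b ∈ Finset.range n, b ∉ usedV := by
      apply Finset.not_subset.1
      intro hsub
      exact absurd (Finset.card_le_card hsub)
        (by rw [Finset.card_range]; exact Nat.not_le.2 (hcardaux v hve₀.1))
    rw [Finset.mem_range] at hbR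
    have hab : a ≠ b := fun h => hbV (h ▸ haV)
    obtain ⟨a₀, ha₀mem, ha₀c⟩ := Finset.mem_image.1 haV
    rw [Finset.mem_filter] at ha₀mem
    have ha₀F' : a₀ ∈ F' := ha₀mem.1
    have ha₀v : v ∈ a₀ := ha₀mem.2
    -- dart machinery
    set ent : Sym2 α × Bool → α := fun p => if p.2 then aend σ p.1 else bend σ p.1 with hent
    set exi : Sym2 α × Bool → α := fun p => if p.2 then bend σ p.1 else aend σ p.1 with hexi
    set stp : (Sym2 α × Bool) → (Sym2 α × Bool) → Prop := fun p q =>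
      q.1 ∈ F' ∧ q.1 ≠ p.1 ∧ (c q.1 = a ∨ c q.1 = b) ∧ exi p = ent q with hstp
    set Reach : Sym2 α × Bool → Prop :=
      fun p => Relation.ReflTransGen stp (a₀, false) p with hReach
    set comp : Sym2 α → Prop := fun g => ∃ s, Reach (g, s) with hcomp
    -- invariant
    have hinvar : ∀ p : Sym2 α × Bool, Reach p →
        p.1 ∈ F' ∧ ((c p.1 = a ∧ p.2 = false) ∨ (c p.1 = b ∧ p.2 = true)) := by
      intro p hp
      rw [hReach] at hp
      induction hp with
      | refl => exact ⟨ha₀F', Or.inl ⟨ha₀c, rfl⟩⟩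
      | tail hr hs ih =>
        rename_i q r
        obtain ⟨hrF', hrne, hrc, hee⟩ := hs
        refine ⟨hrF', ?_⟩
        have hgq : Good σ q.1 := hgood q.1 (hF'F ih.1)
        have hgr : Good σ r.1 := hgood r.1 (hF'F hrF')
        rcases ih.2 with ⟨hca, hs2⟩ | ⟨hcb, hs2⟩
        · -- exited q at its aend (σ = true)
          have hexq : exi q = aend σ q.1 := by rw [hexi]; simp [hs2]
          have hσw : σ (exi q) = true := by rw [hexq]; exact (aend_mem_of_good hgq).2
          have hr2 : r.2 = true := by
            by_contra h
            have h2 : r.2 = false := by revert h; cases r.2 <;> simp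
            rw [hee, hent] at hσw
            simp only [h2, if_neg Bool.false_ne_true] at hσw
            rw [(bend_mem_of_good hgr).2] at hσw
            simp at hσw
          have hwq : exi q ∈ q.1 := by rw [hexq]; exact (aend_mem_of_good hgq).1
          have hwr : exi q ∈ r.1 := by
            rw [hee, hent]
            simp only [hr2, if_pos]
            exact (aend_mem_of_good hgr).1
          have hcne : c r.1 ≠ c q.1 :=
            hcprop r.1 hrF' q.1 ih.1 hrne ⟨exi q, hwr, hwq⟩
          rcases hrc with h | h
          · exact absurd (h.trans hca.symm) hcne
          · exact Or.inr ⟨h, hr2⟩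
        · have hexq : exi q = bend σ q.1 := by rw [hexi]; simp [hs2]
          have hσw : σ (exi q) = false := by rw [hexq]; exact (bend_mem_of_good hgq).2
          have hr2 : r.2 = false := by
            by_contra h
            have h2 : r.2 = true := by revert h; cases r.2 <;> simp
            rw [hee, hent] at hσw
            simp only [h2, if_pos] at hσw
            rw [(aend_mem_of_good hgr).2] at hσw
            simp at hσw
          have hwq : exi q ∈ q.1 := by rw [hexq]; exact (bend_mem_of_good hgq).1
          have hwr : exi q ∈ r.1 := by
            rw [hee, hent]
            simp only [hr2, if_neg Bool.false_ne_true]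
            exact (bend_mem_of_good hgr).1
          have hcne : c r.1 ≠ c q.1 :=
            hcprop r.1 hrF' q.1 ih.1 hrne ⟨exi q, hwr, hwq⟩
          rcases hrc with h | h
          · exact Or.inl ⟨h, hr2⟩
          · exact absurd (h.trans hcb.symm) hcne
    have hcompcol : ∀ g : Sym2 α, comp g → g ∈ F' ∧ (c g = a ∨ c g = b) := by
      intro g hg
      obtain ⟨s, hr⟩ := hg
      have h := hinvar (g, s) hr
      refine ⟨h.1, ?_⟩
      rcases h.2 with ⟨h1, _⟩ | ⟨h1, _⟩
      · exact Or.inl h1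
      · exact Or.inr h1
    have hexi_mem : ∀ p : Sym2 α × Bool, Good σ p.1 → exi p ∈ p.1 := by
      intro p hp
      simp only [hexi]
      by_cases hs : p.2 = true
      · rw [if_pos hs]
        exact (bend_mem_of_good hp).1
      · rw [if_neg hs]
        exact (aend_mem_of_good hp).1
    -- no component edge touches u
    have hnoU : ∀ g : Sym2 α, u ∈ g → ¬ comp g := by
      intro g hug hc
      obtain ⟨s, hr⟩ := hc
      have hinv := hinvar (g, s) hr
      have hgF' : g ∈ F' := hinv.1
      have hcgb : c g = b := by
        rcases hinv.2 with ⟨h1, _⟩ | ⟨h1, _⟩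
        · exact absurd (Finset.mem_image.2 ⟨g, Finset.mem_filter.2 ⟨hgF', hug⟩, h1⟩) haU
        · exact h1
      have hs : s = true := by
        rcases hinv.2 with ⟨h1, h2⟩ | ⟨h1, h2⟩
        · exact absurd (h1.symm.trans hcgb) hab
        · exact h2
      rw [hReach] at hr
      rcases Relation.ReflTransGen.cases_tail hr with heq | ⟨p, hrp, hstep⟩
      · have : s = false := congrArg Prod.snd heq
        rw [hs] at this
        simp at this
      · obtain ⟨hpF', hpne, hpc, hee⟩ := hstep
        have hgood_g : Good σ g := hgood g (hF'F hgF')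
        have huag : u = aend σ g := eq_aend hgood_g hug hue₀.2
        have hentg : ent (g, s) = u := by
          rw [hent]
          simp only [hs, if_pos]
          exact huag.symm
        have hpinv := hinvar p hrp
        have hpgood : Good σ p.1 := hgood p.1 (hF'F hpinv.1)
        have hpu : u ∈ p.1 := by
          have h1 : exi p = u := hee.trans hentg
          rw [← h1]
          exact hexi_mem p hpgood
        have hpng : p.1 ≠ g := fun h => hpne (by rw [h])
        have hpnb : c p.1 ≠ c g := hcprop p.1 hpinv.1 g hgF' hpng ⟨u, hpu, hug⟩
        have hpa : c p.1 = a := by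
          rcases hpinv.2 with ⟨h1, _⟩ | ⟨h1, _⟩
          · exact h1
          · exact absurd (h1.trans hcgb.symm) hpnb
        exact haU (Finset.mem_image.2 ⟨p.1, Finset.mem_filter.2 ⟨hpinv.1, hpu⟩, hpa⟩)
    -- closure of the component
    have hclosure : ∀ g, comp g → ∀ h, h ∈ F' → (c h = a ∨ c h = b) → h ≠ g →
        Shares g h → comp h := by
      intro g hcg h hhF' hhc hne hsh
      obtain ⟨w, hwg, hwh⟩ := hsh
      obtain ⟨s, hr⟩ := hcg
      have hinv := hinvar (g, s) hr
      have hggood : Good σ g := hgood g (hF'F hinv.1)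
      have hhgood : Good σ h := hgood h (hF'F hhF')
      by_cases hwex : w = exi (g, s)
      · refine ⟨σ w, ?_⟩
        rw [hReach]
        rw [hReach] at hr
        refine Relation.ReflTransGen.tail hr ?_
        refine ⟨hhF', fun hq => hne hq, hhc, ?_⟩
        rw [← hwex, hent]
        cases hσw : σ w
        · simp only [if_neg Bool.false_ne_true]
          exact eq_bend hhgood hwh hσw
        · simp only [if_pos]
          exact eq_aend hhgood hwh hσw
      · have hwent : w = ent (g, s) := by
          rw [hent]
          rcases mem_end_cases hggood hwg with h1 | h1
          · cases hs2 : s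
            · exfalso
              apply hwex
              rw [hexi]
              simp only [hs2, if_neg Bool.false_ne_true]
              exact h1
            · simp only [if_pos]
              exact h1
          · cases hs2 : s
            · simp only [if_neg Bool.false_ne_true]
              exact h1
            · exfalso
              apply hwex
              rw [hexi]
              simp only [hs2, if_pos]
              exact h1
        rw [hReach] at hr
        rcases Relation.ReflTransGen.cases_tail hr with heq | ⟨p, hrp, hstep⟩
        · exfalso
          have hg0 : g = a₀ := congrArg Prod.fst heq
          have hs0 : s = false := congrArg Prod.snd heq
          have hwv : w = v := by
            rw [hwent]
            simp only [hent, hs0, if_neg Bool.false_ne_true, hg0]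
            exact (eq_bend (hgood a₀ (hF'F ha₀F')) ha₀v hve₀.2).symm
          rcases hhc with h1 | h1
          · have : h = a₀ := huniq v h a₀ hhF' ha₀F' (hwv ▸ hwh) ha₀v (h1.trans ha₀c.symm)
            exact hne (this.trans hg0.symm)
          · exact hbV (Finset.mem_image.2 ⟨h, Finset.mem_filter.2 ⟨hhF', hwv ▸ hwh⟩, h1⟩)
        · obtain ⟨_, hpne, hpc, hee⟩ := hstep
          have hpinv := hinvar p hrp
          have hpgood : Good σ p.1 := hgood p.1 (hF'F hpinv.1)
          have hwp : w ∈ p.1 := by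
            have h1 : exi p = w := hee.trans hwent.symm
            rw [← h1]
            exact hexi_mem p hpgood
          have hpng : p.1 ≠ g := fun h => hpne (by rw [h])
          have h1 : c p.1 ≠ c g := hcprop p.1 hpinv.1 g hinv.1 hpng ⟨w, hwp, hwg⟩
          have h2 : c h ≠ c g := hcprop h hhF' g hinv.1 hne ⟨w, hwh, hwg⟩
          have hgcol : c g = a ∨ c g = b := by
            rcases hinv.2 with ⟨hx, _⟩ | ⟨hx, _⟩
            · exact Or.inl hx
            · exact Or.inr hx
          have hpcol : c p.1 = a ∨ c p.1 = b := by
            rcases hpinv.2 with ⟨hx, _⟩ | ⟨hx, _⟩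
            · exact Or.inl hx
            · exact Or.inr hx
          have heq2 : c p.1 = c h := by
            rcases hgcol with hx | hx
            · rcases hpcol with hy | hy
              · exact absurd (hy.trans hx.symm) h1
              · rcases hhc with hz | hz
                · exact absurd (hz.trans hx.symm) h2
                · rw [hy, hz]
            · rcases hpcol with hy | hy
              · rcases hhc with hz | hz
                · rw [hy, hz]
                · exact absurd (hz.trans hx.symm) h2
              · exact absurd (hy.trans hx.symm) h1
          have hph : p.1 = h := huniq w p.1 h hpinv.1 hhF' hwp hwh heq2
          refine ⟨p.2, ?_⟩
          rw [hReach]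
          rw [← hph]
          exact hrp
    -- the swapped coloring
    set cSw : Sym2 α → ℕ := fun g => if comp g then (if c g = a then b else a) else c g
      with hcSw
    have hswap_in : ∀ g, comp g → cSw g = a ∨ cSw g = b := by
      intro g hg
      simp only [hcSw, if_pos hg]
      by_cases h : c g = a
      · rw [if_pos h]; exact Or.inr rfl
      · rw [if_neg h]; exact Or.inl rfl
    have hswap_pair : ∀ g, g ∈ F' → ∀ h, h ∈ F' → g ≠ h → Shares g h →
        cSw g ≠ cSw h := by
      intro g hg h hh hne hsh
      by_cases hcg : comp g <;> by_cases hch : comp h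
      · have h1 : c g ≠ c h := hcprop g hg h hh hne hsh
        have h2 := (hcompcol g hcg).2
        have h3 := (hcompcol h hch).2
        simp only [hcSw, if_pos hcg, if_pos hch]
        rcases h2 with hx | hx <;> rcases h3 with hy | hy
        · exact absurd (hx.trans hy.symm) h1
        · have hha : ¬ c h = a := by rw [hy]; exact fun hc => hab hc.symm
          rw [if_pos hx, if_neg hha]
          exact fun hc => hab hc.symm
        · have hga : ¬ c g = a := by rw [hx]; exact fun hc => hab hc.symm
          rw [if_neg hga, if_pos hy]
          exact hab
        · exact absurd (hx.trans hy.symm) h1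
      · have h3 : ¬ (c h = a ∨ c h = b) := by
          intro hc
          exact hch (hclosure g hcg h hh hc (fun he => hne he.symm) hsh)
        simp only [hcSw, if_pos hcg, if_neg hch]
        intro hc
        apply h3
        by_cases hca : c g = a
        · rw [if_pos hca] at hc
          exact Or.inr hc.symm
        · rw [if_neg hca] at hc
          exact Or.inl hc.symm
      · have h3 : ¬ (c g = a ∨ c g = b) := by
          intro hc
          exact hcg (hclosure h hch g hg hc hne (by
            obtain ⟨w, h1, h2⟩ := hsh
            exact ⟨w, h2, h1⟩))
        simp only [hcSw, if_neg hcg, if_pos hch]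
        intro hc
        apply h3
        by_cases hca : c h = a
        · rw [if_pos hca] at hc
          exact Or.inr hc
        · rw [if_neg hca] at hc
          exact Or.inl hc
      · simp only [hcSw, if_neg hcg, if_neg hch]
        exact hcprop g hg h hh hne hsh
    have hswap_ne_a : ∀ h, h ∈ F' → Shares e₀ h → cSw h ≠ a := by
      intro h hh hsh hc
      obtain ⟨w, hwe, hwh⟩ := hsh
      have hor : w = u ∨ w = v := mem_end_cases hge₀ hwe
      by_cases hch : comp h
      · rcases hor with rfl | rfl
        · exact hnoU h hwh hch
        · have h2 := (hcompcol h hch).2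
          simp only [hcSw, if_pos hch] at hc
          by_cases hca : c h = a
          · rw [if_pos hca] at hc
            exact hab hc.symm
          · rw [if_neg hca] at hc
            have hcb : c h = b := by
              rcases h2 with hx | hx
              · exact absurd hx hca
              · exact hx
            exact hbV (Finset.mem_image.2 ⟨h, Finset.mem_filter.2 ⟨hh, hwh⟩, hcb⟩)
      · simp only [hcSw, if_neg hch] at hc
        rcases hor with rfl | rfl
        · exact haU (Finset.mem_image.2 ⟨h, Finset.mem_filter.2 ⟨hh, hwh⟩, hc⟩)
        · have : h = a₀ := huniq v h a₀ hh ha₀F' hwh ha₀v (hc.trans ha₀c.symm)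
          apply hch
          rw [this]
          exact ⟨false, Relation.ReflTransGen.refl⟩
    refine ⟨fun g => if g = e₀ then a else cSw g, ?_, ?_⟩
    · intro e he
      by_cases h : e = e₀
      · simp [h, haR]
      · have heF' : e ∈ F' := Finset.mem_erase.2 ⟨h, he⟩
        simp only [if_neg h]
        by_cases hce : comp e
        · rcases hswap_in e hce with hx | hx
          · rw [hx]; exact haR
          · rw [hx]; exact hbR
        · simp only [hcSw, if_neg hce]
          exact hclt e heF'
    · intro e he f hf hne hsh
      by_cases he' : e = e₀ <;> by_cases hf' : f = e₀
      · exact absurd (he'.trans hf'.symm) hne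
      · subst he'
        have hfF' : f ∈ F' := Finset.mem_erase.2 ⟨hf', hf⟩
        simp only [if_pos rfl, if_neg hf']
        exact fun hc => hswap_ne_a f hfF' hsh hc.symm
      · subst hf'
        have heF' : e ∈ F' := Finset.mem_erase.2 ⟨he', he⟩
        simp only [if_pos rfl, if_neg he']
        refine fun hc => hswap_ne_a e heF' ?_ hc
        obtain ⟨w, h1, h2⟩ := hsh
        exact ⟨w, h2, h1⟩
      · simp only [if_neg he', if_neg hf']
        exact hswap_pair e (Finset.mem_erase.2 ⟨he', he⟩) f (Finset.mem_erase.2 ⟨hf', hf⟩)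
          hne hsh


end PfExtAux

open PfExtAux

/-- A distance-3 precoloring of `G □ K₂` (`G` bipartite, `Δ(G) ≥ 1`) with
at most `Δ(G) + 1` colors is extendable to a proper `(Δ(G)+1)`-edge coloring. -/
theorem extend_distance3_bipartite_times_edge {α : Type*} [Fintype α]
    (G : SimpleGraph α) (hbip : G.Colorable 2) (hΔ : 1 ≤ G.maxDegree)
    (E₀ : Set (Sym2 (α × Fin 2)))
    (φ : Sym2 (α × Fin 2) → Fin (G.maxDegree + 1))
    (hφ : IsProperEdgeColoringOn (G □ (⊤ : SimpleGraph (Fin 2))) E₀ φ)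
    (hdist : ∀ e ∈ E₀, ∀ f ∈ E₀, e ≠ f →
      EdgeDistGE (G □ (⊤ : SimpleGraph (Fin 2))) e f 3) :
    ∃ c : Sym2 (α × Fin 2) → Fin (G.maxDegree + 1),
      IsProperEdgeColoring (G □ (⊤ : SimpleGraph (Fin 2))) c ∧ ∀ e ∈ E₀, c e = φ e := by
  classical
  set H := G □ (⊤ : SimpleGraph (Fin 2)) with hHdef
  obtain ⟨C⟩ := hbip
  set σ : α → Bool := fun v => decide (C v = 0) with hσdef
  have hσprop : ∀ {x y : α}, G.Adj x y → σ x ≠ σ y := by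
    intro x y hxy hc
    have hv := C.valid hxy
    rw [hσdef] at hc
    simp only [decide_eq_decide] at hc
    have h2 : ∀ i : Fin 2, i ≠ 0 → i = 1 := by decide
    rcases Decidable.em (C x = 0) with h | h
    · exact hv (h.trans (hc.1 h).symm)
    · exact hv ((h2 _ h).trans ((h2 _ (fun hcy => h (hc.2 hcy))).symm))
  have hgoodG : ∀ g ∈ G.edgeSet, Good σ g := by
    intro g
    induction g with
    | _ x y =>
      intro hadj
      rw [SimpleGraph.mem_edgeSet] at hadj
      have hxy := hσprop hadj
      cases hx : σ x
      · cases hy : σ y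
        · rw [hx, hy] at hxy; simp at hxy
        · exact ⟨y, x, Sym2.eq_swap, hy, hx⟩
      · cases hy : σ y
        · exact ⟨x, y, rfl, hx, hy⟩
        · rw [hx, hy] at hxy; simp at hxy
  -- walk helpers
  have hwalk2 : ∀ {x y z : α × Fin 2}, (x = y ∨ H.Adj x y) → (y = z ∨ H.Adj y z) →
      H.edist x z ≤ 2 := by
    intro x y z h1 h2
    rcases h1 with rfl | h1
    · rcases h2 with rfl | h2
      · rw [SimpleGraph.edist_self]; exact zero_le
      · have := SimpleGraph.edist_le (SimpleGraph.Walk.cons h2 SimpleGraph.Walk.nil)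
        simp only [SimpleGraph.Walk.length_cons, SimpleGraph.Walk.length_nil] at this
        exact le_trans this (by norm_num)
    · rcases h2 with rfl | h2
      · have := SimpleGraph.edist_le (SimpleGraph.Walk.cons h1 SimpleGraph.Walk.nil)
        simp only [SimpleGraph.Walk.length_cons, SimpleGraph.Walk.length_nil] at this
        exact le_trans this (by norm_num)
      · have := SimpleGraph.edist_le
          (SimpleGraph.Walk.cons h1 (SimpleGraph.Walk.cons h2 SimpleGraph.Walk.nil))
        simp only [SimpleGraph.Walk.length_cons, SimpleGraph.Walk.length_nil] at this
        exact le_trans this (by norm_num)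
  have hfar : ∀ e ∈ E₀, ∀ f ∈ E₀, e ≠ f → ∀ x ∈ e, ∀ y ∈ f,
      H.edist x y ≤ 2 → False := by
    intro e he f hf hne x hx y hy hle
    have h3 := hdist e he f hf hne x hx y hy
    have : (3 : ℕ∞) ≤ 2 := le_trans h3 hle
    norm_num at this
  have hcontra2 : ∀ e ∈ E₀, ∀ f ∈ E₀, e ≠ f → ∀ x ∈ e, ∀ y ∈ f, ∀ z : α × Fin 2,
      (x = z ∨ H.Adj x z) → (z = y ∨ H.Adj z y) → False := by
    intro e he f hf hne x hx y hy z h1 h2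
    exact hfar e he f hf hne x hx y hy (hwalk2 h1 h2)
  have hcontra1 : ∀ e ∈ E₀, ∀ f ∈ E₀, e ≠ f → ∀ x ∈ e, ∀ y ∈ f,
      (x = y ∨ H.Adj x y) → False := by
    intro e he f hf hne x hx y hy h1
    exact hcontra2 e he f hf hne x hx y hy y h1 (Or.inl rfl)
  -- adjacency in H
  have hHhor : ∀ {u v : α} (i : Fin 2), G.Adj u v → H.Adj (u, i) (v, i) := by
    intro u v i h
    rw [hHdef]
    exact SimpleGraph.boxProd_adj_left.mpr h
  have hHver : ∀ (z : α) {i j : Fin 2}, i ≠ j → H.Adj (z, i) (z, j) := by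
    intro z i j h
    rw [hHdef]
    exact SimpleGraph.boxProd_adj_right.mpr (by simpa using h)
  have hfin2 : ∀ i : Fin 2, i = 0 ∨ i = 1 := by decide
  -- horizontal / vertical edges
  set horF : Sym2 α → Fin 2 → Sym2 (α × Fin 2) :=
    fun m i => Sym2.map (fun u => (u, i)) m with hhorF
  set verF : α → Sym2 (α × Fin 2) :=
    fun z => s((z, (0 : Fin 2)), (z, (1 : Fin 2))) with hverF
  have hmapmem : ∀ (m : Sym2 α) (w : α) (i : Fin 2), w ∈ m → (w, i) ∈ horF m i := by
    intro m w i h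
    rw [hhorF]
    exact Sym2.mem_map.2 ⟨w, h, rfl⟩
  have hmapsnd : ∀ (m : Sym2 α) (p : α × Fin 2) (i : Fin 2),
      p ∈ horF m i → p.2 = i ∧ p.1 ∈ m := by
    intro m p i hp
    rw [hhorF] at hp
    obtain ⟨w, hw, rfl⟩ := Sym2.mem_map.1 hp
    exact ⟨rfl, hw⟩
  have hmapproj : ∀ (m : Sym2 α) (i : Fin 2), Sym2.map Prod.fst (horF m i) = m := by
    intro m i
    induction m with
    | _ x y =>
      rw [hhorF]
      rfl
  have hhor_mk : ∀ (u v : α) (i : Fin 2), horF s(u, v) i = s((u, i), (v, i)) := by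
    intro u v i
    rw [hhorF]
    rfl
  have hver_mem : ∀ (z : α) (i : Fin 2), (z, i) ∈ verF z := by
    intro z i
    rcases hfin2 i with rfl | rfl
    · rw [hverF]; exact Sym2.mem_mk_left _ _
    · rw [hverF]; exact Sym2.mem_mk_right _ _
  have hhor_ne_ver : ∀ (m : Sym2 α) (i : Fin 2) (z : α), horF m i ≠ verF z := by
    intro m i z heq
    have h0 : (z, (0 : Fin 2)) ∈ horF m i := by rw [heq, hverF]; exact Sym2.mem_mk_left _ _
    have h1 : (z, (1 : Fin 2)) ∈ horF m i := by rw [heq, hverF]; exact Sym2.mem_mk_right _ _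
    have ha : (0 : Fin 2) = i := (hmapsnd m _ i h0).1
    have hb : (1 : Fin 2) = i := (hmapsnd m _ i h1).1
    exact absurd (ha.trans hb.symm) (by decide)
  -- classification of edges of H
  have hclass : ∀ e ∈ H.edgeSet,
      (∃ (u v : α) (i : Fin 2), G.Adj u v ∧ e = s((u, i), (v, i))) ∨ (∃ z, e = verF z) := by
    intro e
    induction e with
    | _ x y =>
      intro he
      rw [SimpleGraph.mem_edgeSet, hHdef, SimpleGraph.boxProd_adj] at he
      obtain ⟨x1, x2⟩ := x
      obtain ⟨y1, y2⟩ := y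
      rcases he with ⟨hadj, heq⟩ | ⟨hadj, heq⟩
      · simp only at heq
        subst heq
        exact Or.inl ⟨x1, y1, x2, hadj, rfl⟩
      · simp only at heq hadj
        subst heq
        rw [SimpleGraph.top_adj] at hadj
        right
        refine ⟨x1, ?_⟩
        rcases hfin2 x2 with rfl | rfl <;> rcases hfin2 y2 with rfl | rfl
        · exact absurd rfl hadj
        · rw [hverF]
        · rw [hverF]; exact Sym2.eq_swap
        · exact absurd rfl hadj
  have hE₀H : E₀ ⊆ H.edgeSet := hφ.1
  -- M, W, targets
  set Mf : Finset (Sym2 α) :=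
    Finset.univ.filter (fun m => m ∈ G.edgeSet ∧ ∃ i : Fin 2, horF m i ∈ E₀) with hMfdef
  set Wf : Finset α := Finset.univ.filter (fun z => verF z ∈ E₀) with hWfdef
  set btar : Sym2 α → Fin (G.maxDegree + 1) :=
    fun m => if h : ∃ i : Fin 2, horF m i ∈ E₀ then φ (horF m h.choose)
      else ⟨0, by omega⟩ with hbtardef
  -- injectivity of layers: same edge cannot be precoloured in two layers
  have hlayer : ∀ (m : Sym2 α) (i j : Fin 2), horF m i ∈ E₀ → horF m j ∈ E₀ → i = j := by
    intro m i j hi hj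
    by_contra hne
    have hu : m.out.1 ∈ m := Sym2.out_fst_mem m
    have hnedge : horF m i ≠ horF m j := by
      intro heq
      exact hne ((hmapsnd m _ j (heq ▸ hmapmem m m.out.1 i hu)).1)
    exact hcontra1 _ hi _ hj hnedge _ (hmapmem m m.out.1 i hu) _ (hmapmem m m.out.1 j hu)
      (Or.inr (hHver _ hne))
  have hbtar_eq : ∀ (m : Sym2 α) (i : Fin 2), horF m i ∈ E₀ → btar m = φ (horF m i) := by
    intro m i hi
    have hx : ∃ i : Fin 2, horF m i ∈ E₀ := ⟨i, hi⟩
    rw [hbtardef]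
    simp only [dif_pos hx]
    rw [hlayer m hx.choose i hx.choose_spec hi]
  have hhor_inj : ∀ (m m' : Sym2 α) (i j : Fin 2), horF m i = horF m' j → m = m' := by
    intro m m' i j heq
    have h1 := hmapproj m i
    rw [heq, hmapproj m' j] at h1
    exact h1.symm
  have hMwit : ∀ m ∈ Mf, ∃ i : Fin 2, horF m i ∈ E₀ :=
    fun m hm => ((Finset.mem_filter.1 hm).2).2
  have hM_nonadj : ∀ m ∈ Mf, ∀ m' ∈ Mf, m ≠ m' → ¬ Shares m m' := by
    intro m hm m' hm' hne hsh
    obtain ⟨w, hw, hw'⟩ := hsh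
    obtain ⟨i, hi⟩ := hMwit m hm
    obtain ⟨j, hj⟩ := hMwit m' hm'
    have hnedge : horF m i ≠ horF m' j := fun heq => hne (hhor_inj m m' i j heq)
    refine hcontra1 _ hi _ hj hnedge _ (hmapmem m w i hw) _ (hmapmem m' w j hw') ?_
    by_cases hij : i = j
    · subst hij; exact Or.inl rfl
    · exact Or.inr (hHver w hij)
  have hWmem : ∀ v ∈ Wf, verF v ∈ E₀ := fun v hv => (Finset.mem_filter.1 hv).2
  have hWM : ∀ v ∈ Wf, ∀ m ∈ Mf, v ∉ m := by
    intro v hv m hm hvm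
    obtain ⟨i, hi⟩ := hMwit m hm
    exact hcontra1 _ hi _ (hWmem v hv) (hhor_ne_ver m i v) _ (hmapmem m v i hvm) _
      (hver_mem v i) (Or.inl rfl)
  have hver_fst : ∀ (z : α) (p : α × Fin 2), p ∈ verF z → p.1 = z := by
    intro z p hp
    rw [hverF] at hp
    rcases Sym2.mem_iff.1 hp with rfl | rfl <;> rfl
  have hedge_adj : ∀ g, g ∈ G.edgeSet → ∀ w w' : α, w ∈ g → w' ∈ g → w ≠ w' →
      G.Adj w w' := by
    intro g
    induction g with
    | _ x y =>
      intro hg w w' hw hw' hne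
      rw [SimpleGraph.mem_edgeSet] at hg
      rcases Sym2.mem_iff.1 hw with rfl | rfl <;> rcases Sym2.mem_iff.1 hw' with rfl | rfl
      · exact absurd rfl hne
      · exact hg
      · exact hg.symm
      · exact absurd rfl hne
  set Banned : Sym2 α → Fin (G.maxDegree + 1) → Prop := fun g γ =>
    (∃ m ∈ Mf, Shares g m ∧ btar m = γ) ∨ (∃ v ∈ Wf, v ∈ g ∧ φ (verF v) = γ) with hBandef
  have hBan : ∀ g, g ∈ G.edgeSet → ∀ γ1 γ2, Banned g γ1 → Banned g γ2 → γ1 = γ2 := by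
    intro g hg γ1 γ2 h1 h2
    have hMW : ∀ m ∈ Mf, Shares g m → ∀ v ∈ Wf, v ∈ g → False := by
      intro m hm hsh v hv hvg
      obtain ⟨w, hwg, hwm⟩ := hsh
      obtain ⟨i, hi⟩ := hMwit m hm
      refine hcontra1 _ hi _ (hWmem v hv) (hhor_ne_ver m i v) _ (hmapmem m w i hwm) _
        (hver_mem v i) ?_
      by_cases hwv : w = v
      · subst hwv; exact Or.inl rfl
      · exact Or.inr (hHhor i (hedge_adj g hg w v hwg hvg hwv))
    rcases h1 with ⟨m, hm, hsh, hb⟩ | ⟨v, hv, hvg, hb⟩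
    · rcases h2 with ⟨m', hm', hsh', hb'⟩ | ⟨v', hv', hvg', hb'⟩
      · by_cases hmm : m = m'
        · rw [← hb, ← hb', hmm]
        · exfalso
          obtain ⟨w, hwg, hwm⟩ := hsh
          obtain ⟨w', hwg', hwm'⟩ := hsh'
          obtain ⟨i, hi⟩ := hMwit m hm
          obtain ⟨j, hj⟩ := hMwit m' hm'
          have hnedge : horF m i ≠ horF m' j := fun heq => hmm (hhor_inj m m' i j heq)
          by_cases hww : w = w'
          · subst hww
            refine hcontra1 _ hi _ hj hnedge _ (hmapmem m w i hwm) _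
              (hmapmem m' w j hwm') ?_
            by_cases hij : i = j
            · subst hij; exact Or.inl rfl
            · exact Or.inr (hHver w hij)
          · have hadj : G.Adj w w' := hedge_adj g hg w w' hwg hwg' hww
            refine hcontra2 _ hi _ hj hnedge _ (hmapmem m w i hwm) _
              (hmapmem m' w' j hwm') (w', i) (Or.inr (hHhor i hadj)) ?_
            by_cases hij : i = j
            · subst hij; exact Or.inl rfl
            · exact Or.inr (hHver w' hij)
      · exact absurd (hMW m hm hsh v' hv' hvg') not_false
    · rcases h2 with ⟨m', hm', hsh', hb'⟩ | ⟨v', hv', hvg', hb'⟩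
      · exact absurd (hMW m' hm' hsh' v hv hvg) not_false
      · by_cases hvv : v = v'
        · rw [← hb, ← hb', hvv]
        · exfalso
          have hadj : G.Adj v v' := hedge_adj g hg v v' hvg hvg' hvv
          have hnedge : verF v ≠ verF v' := by
            intro heq
            exact hvv ((hver_fst v _ (heq ▸ hver_mem v' 0)).symm)
          exact hcontra1 _ (hWmem v hv) _ (hWmem v' hv') hnedge _ (hver_mem v 0) _
            (hver_mem v' 0) (Or.inr (hHhor 0 hadj))
  -- degree bounds
  have hdegG : ∀ v : α, ((G.edgeFinset.filter (fun e => v ∈ e)).card ≤ G.maxDegree) := by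
    intro v
    have h2 : G.edgeFinset.filter (fun e => v ∈ e) = G.incidenceFinset v :=
      (SimpleGraph.incidenceFinset_eq_filter G v).symm
    rw [h2, SimpleGraph.card_incidenceFinset_eq_degree]
    exact SimpleGraph.degree_le_maxDegree G v
  set EF : Finset (Sym2 α) := G.edgeFinset \ Mf with hEFdef
  have hEFedge : ∀ g ∈ EF, g ∈ G.edgeSet := by
    intro g hg
    exact SimpleGraph.mem_edgeFinset.1 (Finset.mem_sdiff.1 hg).1
  have hEFgood : ∀ g ∈ EF, Good σ g := fun g hg => hgoodG g (hEFedge g hg)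
  have hEFdeg : ∀ v : α, ((EF.filter (fun e => v ∈ e)).card ≤ G.maxDegree) := by
    intro v
    exact le_trans (Finset.card_le_card
      (Finset.filter_subset_filter _ (Finset.sdiff_subset))) (hdegG v)
  obtain ⟨c₀, hc₀lt, hc₀prop⟩ := konig σ G.maxDegree EF hEFgood hEFdeg
  set L : Sym2 α → Finset (Fin (G.maxDegree + 1)) :=
    fun g => Finset.univ.filter (fun γ => ¬ Banned g γ) with hLdef
  have hLcard : ∀ g, g ∈ G.edgeSet → G.maxDegree ≤ (L g).card := by
    intro g hg
    have hb : (Finset.univ.filter (fun γ => Banned g γ)).card ≤ 1 := by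
      rw [Finset.card_le_one]
      intro γ1 h1 γ2 h2
      exact hBan g hg γ1 γ2 (Finset.mem_filter.1 h1).2 (Finset.mem_filter.1 h2).2
    have hsplit : (Finset.univ.filter (fun γ => Banned g γ)).card
        + (Finset.univ.filter (fun γ => ¬ Banned g γ)).card = G.maxDegree + 1 := by
      rw [Finset.card_filter_add_card_filter_not, Finset.card_univ, Fintype.card_fin]
    simp only [hLdef]
    omega
  have hEFD : ∀ g ∈ EF, dplus σ c₀ EF g < ((L g) ∩ Finset.univ).card := by
    intro g hg
    rw [Finset.inter_univ]
    exact lt_of_lt_of_le (dplus_lt σ c₀ G.maxDegree EF hEFgood hc₀prop hc₀lt hg)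
      (hLcard g (hEFedge g hg))
  obtain ⟨c₁, hc₁mem, hc₁prop⟩ := galvin σ c₀ (by omega) L Finset.univ EF hEFgood hc₀prop hEFD
  have hc₁ban : ∀ g ∈ EF, ¬ Banned g (c₁ g) := by
    intro g hg
    have h := hc₁mem g hg
    rw [Finset.mem_inter, hLdef] at h
    exact (Finset.mem_filter.1 h.1).2
  set chat : Sym2 α → Fin (G.maxDegree + 1) :=
    fun g => if g ∈ Mf then btar g else c₁ g with hchatdef
  have hchatM : ∀ m ∈ Mf, chat m = btar m := by
    intro m hm
    rw [hchatdef]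
    simp only [if_pos hm]
  have hchatprop : ∀ g, g ∈ G.edgeSet → ∀ g', g' ∈ G.edgeSet → g ≠ g' → Shares g g' →
      chat g ≠ chat g' := by
    intro g hg g' hg' hne hsh
    have hshsymm : Shares g' g := by
      obtain ⟨w, h1, h2⟩ := hsh
      exact ⟨w, h2, h1⟩
    by_cases hgM : g ∈ Mf <;> by_cases hg'M : g' ∈ Mf
    · exact absurd hsh (hM_nonadj g hgM g' hg'M hne)
    · simp only [hchatdef, if_pos hgM, if_neg hg'M]
      intro hc
      apply hc₁ban g' (Finset.mem_sdiff.2 ⟨SimpleGraph.mem_edgeFinset.2 hg', hg'M⟩)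
      rw [hBandef]
      exact Or.inl ⟨g, hgM, hshsymm, hc⟩
    · simp only [hchatdef, if_neg hgM, if_pos hg'M]
      intro hc
      apply hc₁ban g (Finset.mem_sdiff.2 ⟨SimpleGraph.mem_edgeFinset.2 hg, hgM⟩)
      rw [hBandef]
      exact Or.inl ⟨g', hg'M, hsh, hc.symm⟩
    · simp only [hchatdef, if_neg hgM, if_neg hg'M]
      exact hc₁prop g (Finset.mem_sdiff.2 ⟨SimpleGraph.mem_edgeFinset.2 hg, hgM⟩)
        g' (Finset.mem_sdiff.2 ⟨SimpleGraph.mem_edgeFinset.2 hg', hg'M⟩) hne hsh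
  -- vertical colours
  have hfresh : ∀ v : α, ∃ γ : Fin (G.maxDegree + 1),
      ∀ g ∈ G.edgeFinset, v ∈ g → chat g ≠ γ := by
    intro v
    have hcard : ((G.edgeFinset.filter (fun e => v ∈ e)).image chat).card
        < G.maxDegree + 1 := by
      have := Finset.card_image_le (s := G.edgeFinset.filter (fun e => v ∈ e)) (f := chat)
      have h2 := hdegG v
      omega
    obtain ⟨γ, _, hγ⟩ : ∃ γ ∈ (Finset.univ : Finset (Fin (G.maxDegree + 1))),
        γ ∉ (G.edgeFinset.filter (fun e => v ∈ e)).image chat := by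
      apply Finset.not_subset.1
      intro hsub
      have h3 := Finset.card_le_card hsub
      rw [Finset.card_univ, Fintype.card_fin] at h3
      omega
    exact ⟨γ, fun g hg hvg hc => hγ (Finset.mem_image.2
      ⟨g, Finset.mem_filter.2 ⟨hg, hvg⟩, hc⟩)⟩
  set tv : α → Fin (G.maxDegree + 1) :=
    fun v => if v ∈ Wf then φ (verF v) else (hfresh v).choose with htvdef
  have htv : ∀ v : α, ∀ g, g ∈ G.edgeSet → v ∈ g → chat g ≠ tv v := by
    intro v g hg hvg
    rw [htvdef]
    by_cases hvW : v ∈ Wf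
    · simp only [if_pos hvW]
      have hgM : g ∉ Mf := fun h => hWM v hvW g h hvg
      have hgEF : g ∈ EF := Finset.mem_sdiff.2 ⟨SimpleGraph.mem_edgeFinset.2 hg, hgM⟩
      have hcg : chat g = c₁ g := by rw [hchatdef]; simp only [if_neg hgM]
      rw [hcg]
      intro hc
      apply hc₁ban g hgEF
      rw [hBandef]
      exact Or.inr ⟨v, hvW, hvg, hc.symm⟩
    · simp only [if_neg hvW]
      exact (hfresh v).choose_spec g (SimpleGraph.mem_edgeFinset.2 hg) hvg
  -- final colouring
  set cfin : Sym2 (α × Fin 2) → Fin (G.maxDegree + 1) :=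
    Sym2.lift ⟨fun p q => if p.1 = q.1 then tv p.1 else chat s(p.1, q.1), by
      intro p q
      dsimp only
      split_ifs with h1 h2 h3
      · rw [h1]
      · exact absurd h1.symm h2
      · exact absurd h3.symm h1
      · rw [Sym2.eq_swap]⟩ with hcfindef
  have hcfin_hor : ∀ (u v : α) (i j : Fin 2), u ≠ v →
      cfin s((u, i), (v, j)) = chat s(u, v) := by
    intro u v i j hne
    rw [hcfindef, Sym2.lift_mk]
    exact if_neg hne
  have hcfin_ver : ∀ (z : α) (i j : Fin 2), cfin s((z, i), (z, j)) = tv z := by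
    intro z i j
    rw [hcfindef, Sym2.lift_mk]
    exact if_pos rfl
  have hmemhor : ∀ (u v : α) (i : Fin 2) (w : α × Fin 2), w ∈ s((u, i), (v, i)) →
      w.2 = i ∧ w.1 ∈ s(u, v) := by
    intro u v i w hw
    rcases Sym2.mem_iff.1 hw with rfl | rfl
    · exact ⟨rfl, Sym2.mem_mk_left _ _⟩
    · exact ⟨rfl, Sym2.mem_mk_right _ _⟩
  refine ⟨cfin, ?_, ?_⟩
  · intro e he f hf hne hsh
    obtain ⟨w, hwe, hwf⟩ := hsh
    rcases hclass e he with ⟨u, v, i, huv, heq⟩ | ⟨z, heq⟩ <;>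
      rcases hclass f hf with ⟨x, y, j, hxy, heq'⟩ | ⟨z', heq'⟩ <;> subst heq <;> subst heq'
    · -- hor-hor
      have huvne : u ≠ v := G.ne_of_adj huv
      have hxyne : x ≠ y := G.ne_of_adj hxy
      obtain ⟨hw2i, hw1uv⟩ := hmemhor u v i w hwe
      obtain ⟨hw2j, hw1xy⟩ := hmemhor x y j w hwf
      have hij : i = j := hw2i.symm.trans hw2j
      have hmne : s(u, v) ≠ s(x, y) := by
        intro hm
        apply hne
        rw [← hhor_mk u v i, ← hhor_mk x y j, hm, hij]
      rw [hcfin_hor u v i i huvne, hcfin_hor x y j j hxyne]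
      exact hchatprop s(u, v) ((SimpleGraph.mem_edgeSet G).2 huv)
        s(x, y) ((SimpleGraph.mem_edgeSet G).2 hxy) hmne ⟨w.1, hw1uv, hw1xy⟩
    · -- hor-ver
      have huvne : u ≠ v := G.ne_of_adj huv
      obtain ⟨hw2i, hw1uv⟩ := hmemhor u v i w hwe
      have hwz : w.1 = z' := hver_fst z' w hwf
      rw [hcfin_hor u v i i huvne, hverF, hcfin_ver]
      exact htv z' s(u, v) ((SimpleGraph.mem_edgeSet G).2 huv) (hwz ▸ hw1uv)
    · -- ver-hor
      have hxyne : x ≠ y := G.ne_of_adj hxy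
      obtain ⟨hw2j, hw1xy⟩ := hmemhor x y j w hwf
      have hwz : w.1 = z := hver_fst z w hwe
      rw [hcfin_hor x y j j hxyne, hverF, hcfin_ver]
      exact fun hc => htv z s(x, y) ((SimpleGraph.mem_edgeSet G).2 hxy) (hwz ▸ hw1xy) hc.symm
    · -- ver-ver
      have h1 : w.1 = z := hver_fst z w hwe
      have h2 : w.1 = z' := hver_fst z' w hwf
      have h3 : z = z' := h1.symm.trans h2
      exact fun _ => hne (by rw [h3])
  · intro e he
    rcases hclass e (hE₀H he) with ⟨u, v, i, huv, heq⟩ | ⟨z, heq⟩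
    · subst heq
      have hmE₀ : horF s(u, v) i ∈ E₀ := by rw [hhor_mk]; exact he
      have hm : s(u, v) ∈ Mf := by
        rw [hMfdef, Finset.mem_filter]
        exact ⟨Finset.mem_univ _, (SimpleGraph.mem_edgeSet G).2 huv, ⟨i, hmE₀⟩⟩
      rw [hcfin_hor u v i i (G.ne_of_adj huv), hchatM _ hm, hbtar_eq s(u, v) i hmE₀,
        hhor_mk]
    · subst heq
      have hz : z ∈ Wf := by
        rw [hWfdef, Finset.mem_filter]
        exact ⟨Finset.mem_univ _, he⟩
      have hcv : cfin (verF z) = tv z := by rw [hverF]; exact hcfin_ver z 0 1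
      rw [hcv, htvdef]
      simp only [if_pos hz]
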